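/- Let N be a positive integer, let K = ℚ(ζ_N) be the N-th cyclotomic field, and let ζ ∈ K be a primitive N-th root of unity. Then there exists a field automorphism σ of K over ℚ with σ(σ(ζ)) = −ζ if and only if 16 divides N. -/

import Mathlib

/-- Key integer-arithmetic lemma: if `v` is coprime to `n`, `n ∣ 2(v²-1)` but
`n ∤ v²-1`, then `16 ∣ n`. -/
private lemma int_key {n v : ℤ} (hcop : IsCoprime v n)
    (h1 : n ∣ 2 * (v ^ 2 - 1)) (h2 : ¬ n ∣ (v ^ 2 - 1)) : 16 ∣ n := by
  obtain ⟨q, hq⟩ := h1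
  have hq_odd : ¬ (2 : ℤ) ∣ q := by
    rintro ⟨q', rfl⟩
    exact h2 ⟨q', by linarith⟩
  have hn_even : (2 : ℤ) ∣ n := by
    by_contra h
    have hc2 : IsCoprime n 2 := ((Int.prime_two.coprime_iff_not_dvd).mpr h).symm
    exact h2 (hc2.dvd_of_dvd_mul_left ⟨q, hq⟩)
  have hv_odd : ¬ (2 : ℤ) ∣ v := by
    intro hv
    have := hcop.isUnit_of_dvd' hv hn_even
    rw [Int.isUnit_iff] at this
    omega
  -- 8 ∣ v² - 1
  obtain ⟨t, ht⟩ : ∃ t, v = 2 * t + 1 := ⟨v / 2, by omega⟩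
  obtain ⟨s, hs⟩ := Int.even_mul_succ_self t
  have h8 : v ^ 2 - 1 = 8 * s := by rw [ht]; nlinarith [hs]
  obtain ⟨m, hm⟩ := hn_even
  have hmq : m * q = 8 * s := by rw [hm] at hq; linarith
  have hc8 : IsCoprime (8 : ℤ) q := by
    have h2q : IsCoprime (2 : ℤ) q := (Int.prime_two.coprime_iff_not_dvd).mpr hq_odd
    have h8q : IsCoprime ((2 : ℤ) ^ 3) q := h2q.pow_left
    norm_num at h8q
    exact h8q
  obtain ⟨u, hu⟩ : (8 : ℤ) ∣ m := hc8.dvd_of_dvd_mul_right ⟨s, by linarith [hmq]⟩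
  exact ⟨u, by rw [hm, hu]; ring⟩

/-- Let `N` be a positive integer, `K = ℚ(ζ_N)` the `N`-th cyclotomic
field, and `ζ ∈ K` a primitive `N`-th root of unity.  Then there exists a field
automorphism `σ` of `K` over `ℚ` with `σ (σ ζ) = -ζ` if and only if `16 ∣ N`. -/
theorem cyclotomic_exists_sq_aut_neg_iff_sixteen_dvd
    (N : ℕ+) (K : Type) [Field K] [Algebra ℚ K] [IsCyclotomicExtension {(N : ℕ)} ℚ K]
    (ζ : K) (hζ : IsPrimitiveRoot ζ (N : ℕ)) :
    (∃ σ : K ≃ₐ[ℚ] K, σ (σ ζ) = -ζ) ↔ 16 ∣ (N : ℕ) := by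
  haveI : NeZero ((N : ℕ)) := ⟨N.pos.ne'⟩
  haveI : CharZero K := charZero_of_injective_algebraMap (algebraMap ℚ K).injective
  have hζ0 : ζ ≠ 0 := hζ.ne_zero N.pos.ne'
  constructor
  · rintro ⟨σ, hσ⟩
    set u := hζ.autToPow ℚ σ with hu
    set v := ((u : ZMod (N : ℕ))).val with hvdef
    have hv : σ ζ = ζ ^ v := (hζ.autToPow_spec ℚ σ).symm
    have hcop : Nat.Coprime v (N : ℕ) := ZMod.val_coe_unit_coprime u
    have hσσ : ζ ^ (v * v) = -ζ := by
      rw [← hσ, hv, map_pow, hv, ← pow_mul]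
    have hz1 : ζ ^ (((v : ℤ)) ^ 2) = -ζ := by
      rw [show ((v : ℤ)) ^ 2 = ((v * v : ℕ) : ℤ) by push_cast; ring, zpow_natCast, hσσ]
    have hz : ζ ^ ((v : ℤ) ^ 2 - 1) = -1 := by
      rw [sub_eq_add_neg, zpow_add₀ hζ0, hz1, zpow_neg, zpow_one, neg_mul,
        mul_inv_cancel₀ hζ0]
    have h1 : ((N : ℕ) : ℤ) ∣ 2 * ((v : ℤ) ^ 2 - 1) := by
      rw [← hζ.zpow_eq_one_iff_dvd]
      rw [mul_comm, zpow_mul, hz]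
      norm_num
    have h2 : ¬ ((N : ℕ) : ℤ) ∣ ((v : ℤ) ^ 2 - 1) := by
      rw [← hζ.zpow_eq_one_iff_dvd, hz]
      intro h
      exact absurd h (by norm_num)
    have hcopZ : IsCoprime ((v : ℤ)) (((N : ℕ) : ℤ)) := by
      rw [Int.isCoprime_iff_gcd_eq_one, Int.gcd_natCast_natCast]
      exact hcop
    have := int_key hcopZ h1 h2
    exact_mod_cast this
  · rintro ⟨M, hM⟩
    have hMpos : 0 < M := by have := N.pos; omega
    have c2 : Nat.Coprime (4 * M + 1) (4 * M) := by
      have : Nat.Coprime (1 + 4 * M) (4 * M) := Nat.coprime_add_self_left.mpr (Nat.coprime_one_left _)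
      rwa [Nat.add_comm] at this
    have c1 : Nat.Coprime (4 * M + 1) 4 := c2.coprime_dvd_right ⟨M, rfl⟩
    have hcop : Nat.Coprime (4 * M + 1) (N : ℕ) := by
      rw [hM, show 16 * M = 4 * (4 * M) by ring]
      exact c1.mul_right c2
    have hζk : IsPrimitiveRoot (ζ ^ (4 * M + 1)) (N : ℕ) :=
      hζ.pow_of_coprime (4 * M + 1) hcop
    have irr : Irreducible (Polynomial.cyclotomic (N : ℕ) ℚ) :=
      Polynomial.cyclotomic.irreducible_rat N.pos
    haveI := IsCyclotomicExtension.neZero' N ℚ K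
    have hmin : minpoly ℚ (hζ.powerBasis ℚ).gen = minpoly ℚ (hζk.powerBasis ℚ).gen := by
      rw [IsPrimitiveRoot.powerBasis_gen, IsPrimitiveRoot.powerBasis_gen,
        ← hζ.minpoly_eq_cyclotomic_of_irreducible irr,
        ← hζk.minpoly_eq_cyclotomic_of_irreducible irr]
    refine ⟨(hζ.powerBasis ℚ).equivOfMinpoly (hζk.powerBasis ℚ) hmin, ?_⟩
    have hσζ : (hζ.powerBasis ℚ).equivOfMinpoly (hζk.powerBasis ℚ) hmin ζ
        = ζ ^ (4 * M + 1) := by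
      have := (hζ.powerBasis ℚ).equivOfMinpoly_gen (hζk.powerBasis ℚ) hmin
      rwa [IsPrimitiveRoot.powerBasis_gen, IsPrimitiveRoot.powerBasis_gen] at this
    have hN1 : ζ ^ (16 * M) = 1 := by rw [← hM]; exact hζ.pow_eq_one
    have hNeg : ζ ^ (8 * M) = -1 :=
      (hζ.pow N.pos (by rw [hM]; ring)).eq_neg_one_of_two_right
    rw [hσζ, map_pow, hσζ, ← pow_mul,
      show (4 * M + 1) * (4 * M + 1) = 16 * M * M + 8 * M + 1 by ring,
      pow_add, pow_add, pow_mul, hN1, one_pow, one_mul, hNeg, pow_one]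
    ring
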